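/- Let w be an infinite partial word with infinitely many holes. If there exists a completion ŵ of w with Sub(w) = Sub(ŵ), then w is recurrent. (Combined with the converse, for words with infinitely many holes: w is recurrent iff it has a completion with the same subword set.) -/

import Mathlib

open Set

variable {A : Type*}

/-- The full word `u` occurs at position `i` in the partial word `w`
(`none` is the hole symbol, compatible with every letter). -/
def Occurs (w : ℕ → Option A) (u : List A) (i : ℕ) : Prop :=
  ∀ j : Fin u.length, w (i + (j : ℕ)) = none ∨ w (i + (j : ℕ)) = some (u.get j)

/-- `u` is a subword of `w`: it occurs at some position. -/
def IsSubword (w : ℕ → Option A) (u : List A) : Prop :=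
  ∃ i, Occurs w u i

/-- `u` is a recurrent subword of `w`: it occurs at infinitely many positions. -/
def IsRecSubword (w : ℕ → Option A) (u : List A) : Prop :=
  {i | Occurs w u i}.Infinite

/-- Subword complexity: number of distinct full words of length `n`
that are subwords of `w`. -/
noncomputable def pcomp (w : ℕ → Option A) (n : ℕ) : ℕ :=
  {u : List A | u.length = n ∧ IsSubword w u}.ncard

/-- Number of recurrent subwords of length `n`. -/
noncomputable def rcomp (w : ℕ → Option A) (n : ℕ) : ℕ :=
  {u : List A | u.length = n ∧ IsRecSubword w u}.ncard

/-- `w` is recurrent: every subword occurs infinitely often. -/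
def Recurrent (w : ℕ → Option A) : Prop :=
  ∀ u : List A, IsSubword w u → IsRecSubword w u

/-- `w` is ultimately recurrent: some shift of `w` is recurrent. -/
def UltimatelyRecurrent (w : ℕ → Option A) : Prop :=
  ∃ p, Recurrent (fun i => w (i + p))

/-- `c` is a completion of `w`: it agrees with `w` at every non-hole position. -/
def IsCompletion (w : ℕ → Option A) (c : ℕ → A) : Prop :=
  ∀ i, ∀ a : A, w i = some a → c i = a

/-- `w` is uniformly recurrent: for every subword `u` there is a window size `m`
such that every factor of `w` of length `m` contains an occurrence of `u`. -/
def UniformlyRecurrent (w : ℕ → Option A) : Prop :=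
  ∀ u : List A, IsSubword w u →
    ∃ m, ∀ i, ∃ j, i ≤ j ∧ j + u.length ≤ i + m ∧ Occurs w u j

/-- Every factor of `w` of length `m` contains every length-`n` subword of `w`. -/
def GoodWindow (w : ℕ → Option A) (n m : ℕ) : Prop :=
  ∀ u : List A, u.length = n → IsSubword w u →
    ∀ i, ∃ j, i ≤ j ∧ j + n ≤ i + m ∧ Occurs w u j

/-- The recurrence function `R_w(n)`: the least window size `m` such that every
factor of length `m` contains every subword of length `n`. -/
noncomputable def Rfun (w : ℕ → Option A) (n : ℕ) : ℕ :=
  sInf {m | GoodWindow w n m}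

/-- `w` is ultimately periodic: from some position on, `w` is compatible with a
periodic sequence of letters. -/
def UltimatelyPeriodic (w : ℕ → Option A) : Prop :=
  ∃ N p, 0 < p ∧ ∃ a : ℕ → A, ∀ i, N ≤ i → w i = none ∨ w i = some (a (i % p))

theorem stmt14 [Nontrivial A] (w : ℕ → Option A)
    (hinf : {i | w i = none}.Infinite) (c : ℕ → A) (hc : IsCompletion w c)
    (hsub : ∀ u : List A, IsSubword w u ↔ IsSubword (fun i => some (c i)) u) :
    Recurrent w := by
  intro u hu
  set n := u.length with hn
  obtain ⟨i0, hi0⟩ := (hsub u).1 hu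
  have hi0' : ∀ t : Fin n, c (i0 + (t : ℕ)) = u.get t := by
    intro t
    rcases hi0 t with h | h
    · simp at h
    · simpa using h
  -- occurrence in c gives occurrence in w
  have occ_cw : ∀ q, (∀ t : Fin n, c (q + (t : ℕ)) = u.get t) → Occurs w u q := by
    intro q hq t
    rcases hw : w (q + (t : ℕ)) with _ | a
    · exact Or.inl rfl
    · right
      have h1 : c (q + (t : ℕ)) = a := hc _ a hw
      have h2 := hq t
      rw [h1] at h2
      rw [h2]
  have main : ∀ N, ∃ q, N < q ∧ Occurs w u q := by
    intro N
    obtain ⟨h, hhole, hh⟩ := hinf.exists_gt (i0 + n + 2 * N + 2)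
    obtain ⟨b, hb⟩ := exists_ne (c h)
    set v : List A := List.ofFn (fun t : Fin (h + 1) => if (t : ℕ) = h then b else c t)
      with hvdef
    have hvlen : v.length = h + 1 := by simp [hvdef]
    have hvget : ∀ t : Fin v.length, v.get t = if (t : ℕ) = h then b else c t := by
      intro t
      simp only [hvdef, List.get_eq_getElem, List.getElem_ofFn]
    have hvw : IsSubword w v := by
      refine ⟨0, fun t => ?_⟩
      rcases hwt : w (0 + (t : ℕ)) with _ | a
      · exact Or.inl rfl
      · right
        have ht : (t : ℕ) ≠ h := by
          intro he
          rw [zero_add, he] at hwt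
          rw [hhole] at hwt
          cases hwt
        rw [zero_add] at hwt
        rw [hvget t, if_neg ht, hc _ a hwt]
    obtain ⟨j, hj⟩ := (hsub v).1 hvw
    have hjc : ∀ t : Fin v.length, c (j + (t : ℕ)) = v.get t := by
      intro t
      rcases hj t with h' | h'
      · simp at h'
      · simpa using h'
    have hj0 : j ≠ 0 := by
      intro hj0
      have := hjc ⟨h, by omega⟩
      rw [hvget] at this
      simp [hj0] at this
      exact hb this.symm
    have shift : ∀ s, s < h → c (j + s) = c s := by
      intro s hs
      have := hjc ⟨s, by omega⟩
      rw [hvget] at this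
      simpa [Nat.ne_of_lt hs] using this
    -- periodic propagation
    have prop : ∀ k, i0 + k * j + n ≤ h → ∀ t : Fin n, c (i0 + k * j + (t : ℕ)) = u.get t := by
      intro k
      induction k with
      | zero => intro _ t; simpa using hi0' t
      | succ k ih =>
        intro hk t
        have hj1 : 1 ≤ j := Nat.one_le_iff_ne_zero.2 hj0
        have hk' : i0 + k * j + n ≤ h := by nlinarith [Nat.succ_mul k j]
        have harith : i0 + (k + 1) * j + (t : ℕ) = j + (i0 + k * j + (t : ℕ)) := by ring
        rw [harith, shift _ (by have := t.isLt; omega)]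
        exact ih hk' t
    by_cases hcase : N < i0 + j
    · -- direct shifted occurrence
      refine ⟨i0 + j, hcase, occ_cw _ ?_⟩
      intro t
      have harith : i0 + j + (t : ℕ) = j + (i0 + (t : ℕ)) := by ring
      rw [harith, shift _ (by have := t.isLt; omega)]
      exact hi0' t
    · -- j ≤ N : pump periodicity
      have hjN : j ≤ N := by omega
      have hj1 : 0 < j := Nat.pos_of_ne_zero hj0
      set k := (h - n - i0) / j with hk
      have h1 : k * j + (h - n - i0) % j = h - n - i0 := by
        rw [hk, Nat.mul_comm]; exact Nat.div_add_mod _ _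
      have h2 : (h - n - i0) % j < j := Nat.mod_lt _ hj1
      have hle : i0 + k * j + n ≤ h := by omega
      have hgt : N < i0 + k * j := by omega
      exact ⟨i0 + k * j, hgt, occ_cw _ (prop k hle)⟩
  apply Set.infinite_of_forall_exists_gt
  intro a
  obtain ⟨q, hq1, hq2⟩ := main a
  exact ⟨q, hq2, hq1⟩
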